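/- arXiv:1012.3892 — 2 statements merged into one kernel-verified Lean document; each statement's English description precedes it below -/
import Mathlib

section
/- Let q be a positive integer and let b_i = binom(i, q) for all positive integers i. Then for all integers n ≥ 2, the identity of integers C^b(n+q+1) = ∑_{i=0}^{q} (-1)^{i+q} binom(q+1, i) · C^b(n+i) + C^b(n+1) holds. -/
open Finset

/-- The number of generalized compositions of `n` with `k` parts, where the part `i`
comes in `b i` types: the sum over all `k`-tuples of positive integers summing to `n`
of the product of the `b`-values of the parts. -/
def genComp (b : ℕ → ℕ) (n k : ℕ) : ℕ :=
  ∑ f ∈ (Finset.Nat.antidiagonalTuple k n).filter (fun f => ∀ j, 0 < f j),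
    ∏ j, b (f j)

/-- The total number of generalized compositions of `n` (with any number of parts). -/
def genCompAll (b : ℕ → ℕ) (n : ℕ) : ℕ :=
  ∑ k ∈ Finset.range (n + 1), genComp b n k

lemma genComp_zero (b : ℕ → ℕ) (n : ℕ) : genComp b n 0 = if n = 0 then 1 else 0 := by
  unfold genComp
  cases n with
  | zero => simp [Finset.Nat.antidiagonalTuple_zero_zero]
  | succ m => simp [Finset.Nat.antidiagonalTuple_zero_succ]

lemma genComp_eq_zero_of_lt (b : ℕ → ℕ) {n k : ℕ} (h : n < k) : genComp b n k = 0 := by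
  unfold genComp
  have : (Finset.Nat.antidiagonalTuple k n).filter (fun f => ∀ j, 0 < f j) = ∅ := by
    rw [Finset.eq_empty_iff_forall_notMem]
    intro f hf
    simp only [Finset.mem_filter, Finset.Nat.mem_antidiagonalTuple] at hf
    obtain ⟨hsum, hpos⟩ := hf
    have : (Finset.univ : Finset (Fin k)).card • 1 ≤ ∑ j, f j :=
      Finset.card_nsmul_le_sum Finset.univ f 1 (fun j _ => hpos j)
    simp at this
    omega
  rw [this, Finset.sum_empty]

lemma genComp_succ (b : ℕ → ℕ) (n k : ℕ) :
    genComp b n (k+1) = ∑ i ∈ Finset.Icc 1 n, b i * genComp b (n - i) k := by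
  unfold genComp
  simp_rw [Finset.mul_sum, Finset.sum_sigma']
  refine Finset.sum_nbij' (fun f => ⟨f 0, Fin.tail f⟩) (fun p => Fin.cons p.1 p.2) ?_ ?_ ?_ ?_ ?_
  · intro f hf
    simp only [Finset.mem_filter, Finset.Nat.mem_antidiagonalTuple] at hf
    obtain ⟨hsum, hpos⟩ := hf
    have h0 : f 0 ≤ n := hsum ▸ Finset.single_le_sum (f := f) (fun i _ => Nat.zero_le _) (Finset.mem_univ 0)
    have hs : ∑ j, f (Fin.succ j) = n - f 0 := by
      have := Fin.sum_univ_succ f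
      omega
    simp only [Finset.mem_sigma, Finset.mem_Icc, Finset.mem_filter,
      Finset.Nat.mem_antidiagonalTuple]
    exact ⟨⟨hpos 0, h0⟩, hs, fun j => hpos j.succ⟩
  · intro p hp
    simp only [Finset.mem_sigma, Finset.mem_Icc, Finset.mem_filter,
      Finset.Nat.mem_antidiagonalTuple] at hp
    obtain ⟨⟨h1, h2⟩, hsum, hpos⟩ := hp
    simp only [Finset.mem_filter, Finset.Nat.mem_antidiagonalTuple]
    constructor
    · rw [Fin.sum_univ_succ]
      simp only [Fin.cons_zero, Fin.cons_succ]
      omega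
    · intro j
      refine Fin.cases ?_ ?_ j
      · simpa using (show 0 < p.1 from h1)
      · intro i; simpa using hpos i
  · intro f hf; exact Fin.cons_self_tail f
  · intro p hp
    simp only [Fin.cons_zero, Fin.tail_cons]
  · intro f hf
    rw [Fin.prod_univ_succ]
    rfl

lemma genCompAll_rec (b : ℕ → ℕ) {n : ℕ} (hn : 1 ≤ n) :
    genCompAll b n = ∑ i ∈ Finset.Icc 1 n, b i * genCompAll b (n - i) := by
  unfold genCompAll
  rw [Finset.sum_range_succ']
  have h0 : genComp b n 0 = 0 := by rw [genComp_zero]; simp; omega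
  rw [h0, add_zero]
  simp_rw [genComp_succ]
  rw [Finset.sum_comm]
  apply Finset.sum_congr rfl
  intro i hi
  simp only [Finset.mem_Icc] at hi
  rw [← Finset.mul_sum]
  congr 1
  symm
  apply Finset.sum_subset
  · apply Finset.range_subset_range.mpr; omega
  · intro k hk hk'
    simp only [Finset.mem_range] at hk hk'
    exact genComp_eq_zero_of_lt b (by omega)


lemma sum_choose_step (q r s : ℕ) :
    ∑ j ∈ Finset.range (r+2), (-1:ℤ)^j * ((r+1).choose j) * ((s-j).choose q)
    = (∑ j ∈ Finset.range (r+1), (-1:ℤ)^j * (r.choose j) * ((s-j).choose q))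
      - ∑ j ∈ Finset.range (r+1), (-1:ℤ)^j * (r.choose j) * ((s-1-j).choose q) := by
  rw [Finset.sum_range_succ' _ (r+1)]
  have e1 : ∀ j, (-1:ℤ)^(j+1) * ((r+1).choose (j+1)) * ((s-(j+1)).choose q)
      = -((-1:ℤ)^j * (r.choose j) * ((s-1-j).choose q))
        + (-1:ℤ)^(j+1) * (r.choose (j+1)) * ((s-(j+1)).choose q) := by
    intro j
    have h2 : s - (j+1) = s - 1 - j := by omega
    rw [Nat.choose_succ_succ, h2]
    push_cast
    ring
  rw [Finset.sum_congr rfl (fun j _ => e1 j), Finset.sum_add_distrib, Finset.sum_neg_distrib]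
  have e2 := Finset.sum_range_succ' (fun j => ((-1:ℤ)^j * ((r.choose j : ℕ) : ℤ) * (((s-j).choose q : ℕ) : ℤ))) (r+1)
  rw [Finset.sum_range_succ] at e2
  simp only [Nat.choose_succ_self, Nat.cast_zero, mul_zero, zero_mul, add_zero, pow_zero,
    Nat.choose_zero_right, Nat.cast_one, one_mul, Nat.sub_zero] at e2
  simp only [pow_zero, Nat.choose_zero_right, Nat.cast_one, one_mul, Nat.sub_zero]
  linarith [e2]

lemma sum_choose_eval (q : ℕ) (hq : 1 ≤ q) : ∀ r, r ≤ q → ∀ s : ℕ,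
    ∑ j ∈ Finset.range (r+1), (-1:ℤ)^j * (r.choose j) * ((s-j).choose q)
    = if q ≤ s then (((s-r).choose (q-r) : ℕ) : ℤ) else 0 := by
  intro r
  induction r with
  | zero =>
    intro _ s
    rw [zero_add, Finset.sum_range_one]
    simp only [pow_zero, Nat.choose_self, Nat.cast_one, one_mul, Nat.sub_zero]
    split_ifs with h
    · rfl
    · simp [Nat.choose_eq_zero_of_lt (show s < q by omega)]
  | succ r ih =>
    intro hr s
    rw [sum_choose_step, ih (by omega) s, ih (by omega) (s-1)]
    by_cases h1 : q ≤ s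
    · by_cases h2 : s = q
      · have h3 : ¬ q ≤ s - 1 := by omega
        rw [if_pos h1, if_neg h3, if_pos h1, sub_zero, h2]
        simp [Nat.choose_self]
      · have h3 : q ≤ s - 1 := by omega
        rw [if_pos h1, if_pos h3, if_pos h1]
        have ha : s - r = (s - (r+1)) + 1 := by omega
        have hb : q - r = (q - (r+1)) + 1 := by omega
        have hc : s - 1 - r = s - (r+1) := by omega
        rw [ha, hb, hc, Nat.choose_succ_succ]
        push_cast
        ring
    · have h3 : ¬ q ≤ s - 1 := by omega
      rw [if_neg h1, if_neg h3, if_neg h1, sub_zero]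

lemma sum_choose_delta (q : ℕ) (hq : 1 ≤ q) (s : ℕ) :
    ∑ j ∈ Finset.range (q+2), (-1:ℤ)^j * ((q+1).choose j) * ((s-j).choose q)
    = if s = q then 1 else 0 := by
  rw [sum_choose_step, sum_choose_eval q hq q le_rfl s, sum_choose_eval q hq q le_rfl (s-1)]
  simp only [Nat.sub_self, Nat.choose_zero_right, Nat.cast_one]
  split_ifs <;> norm_num <;> omega


section Main
variable (q : ℕ) (hq : 1 ≤ q) (b : ℕ → ℕ) (hb : ∀ i, 1 ≤ i → b i = Nat.choose i q)

include hq hb in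
lemma key1 : ∀ M : ℕ, 1 ≤ M → (genCompAll b M : ℤ)
    = ∑ i ∈ Finset.range (M+1), ((Nat.choose i q : ℕ) : ℤ) * (genCompAll b (M-i) : ℤ) := by
  intro M hM
  rw [genCompAll_rec b hM, Nat.cast_sum]
  rw [show (∑ i ∈ Finset.Icc 1 M, ((b i * genCompAll b (M - i) : ℕ) : ℤ))
      = ∑ i ∈ Finset.Icc 1 M, ((Nat.choose i q : ℕ) : ℤ) * (genCompAll b (M-i) : ℤ) from
    Finset.sum_congr rfl (fun i hi => by
      rw [Finset.mem_Icc] at hi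
      rw [hb i hi.1]
      push_cast
      ring)]
  apply Finset.sum_subset
  · intro i hi
    rw [Finset.mem_Icc] at hi
    rw [Finset.mem_range]
    omega
  · intro i hi hi'
    rw [Finset.mem_range] at hi
    rw [Finset.mem_Icc] at hi'
    have : i = 0 := by omega
    subst this
    rw [Nat.choose_eq_zero_of_lt (by omega)]
    simp

include hq hb in
lemma key2 (m : ℕ) (hm : q + 2 ≤ m) :
    ∑ j ∈ Finset.range (q+2), (-1:ℤ)^j * ((q+1).choose j) * (genCompAll b (m-j) : ℤ)
    = (genCompAll b (m-q) : ℤ) := by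
  have step1 : ∀ j ∈ Finset.range (q+2),
      (-1:ℤ)^j * ((q+1).choose j) * (genCompAll b (m-j) : ℤ)
      = ∑ s ∈ Finset.range (m+1),
          (-1:ℤ)^j * ((q+1).choose j) * ((s-j).choose q) * (genCompAll b (m-s) : ℤ) := by
    intro j hj
    rw [Finset.mem_range] at hj
    rw [key1 q hq b hb (m-j) (by omega), Finset.mul_sum]
    have e1 : ∑ i ∈ Finset.range (m-j+1),
        (-1:ℤ)^j * ((q+1).choose j) * (((i.choose q : ℕ):ℤ) * (genCompAll b (m-j-i) : ℤ))
        = ∑ s ∈ Finset.Ico j (m+1),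
          (-1:ℤ)^j * ((q+1).choose j) * ((s-j).choose q) * (genCompAll b (m-s) : ℤ) := by
      rw [Finset.sum_Ico_eq_sum_range]
      have hrange : m + 1 - j = m - j + 1 := by omega
      rw [hrange]
      apply Finset.sum_congr rfl
      intro i _
      have h1 : j + i - j = i := by omega
      have h2 : m - (j + i) = m - j - i := by omega
      rw [h1, h2]
      ring
    rw [e1]
    apply Finset.sum_subset
    · rw [Finset.range_eq_Ico]
      exact Finset.Ico_subset_Ico (Nat.zero_le j) le_rfl
    · intro s hs hs'
      rw [Finset.mem_range] at hs
      rw [Finset.mem_Ico] at hs'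
      have h1 : s - j = 0 := by omega
      rw [h1, Nat.choose_eq_zero_of_lt hq]
      simp
  rw [Finset.sum_congr rfl step1, Finset.sum_comm]
  have step2 : ∀ s ∈ Finset.range (m+1),
      ∑ j ∈ Finset.range (q+2),
        (-1:ℤ)^j * ((q+1).choose j) * ((s-j).choose q) * (genCompAll b (m-s) : ℤ)
      = (if s = q then 1 else 0) * (genCompAll b (m-s) : ℤ) := by
    intro s _
    rw [← Finset.sum_mul, sum_choose_delta q hq s]
  rw [Finset.sum_congr rfl step2]
  simp only [ite_mul, one_mul, zero_mul]
  rw [Finset.sum_ite_eq' (Finset.range (m+1)) q (fun s => (genCompAll b (m-s) : ℤ))]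
  rw [if_pos (Finset.mem_range.mpr (by omega))]

end Main


theorem genCompAll_explicit_recurrence (q : ℕ) (hq : 1 ≤ q) (b : ℕ → ℕ)
    (hb : ∀ i, 1 ≤ i → b i = Nat.choose i q) (n : ℕ) (hn : 2 ≤ n) :
    (genCompAll b (n + q + 1) : ℤ) =
      (∑ i ∈ Finset.range (q + 1),
        (-1 : ℤ) ^ (i + q) * Nat.choose (q + 1) i * (genCompAll b (n + i) : ℤ)) +
      (genCompAll b (n + 1) : ℤ) := by
  have key := key2 q hq b hb (n+q+1) (by omega)
  rw [Finset.sum_range_succ'] at key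
  simp only [pow_zero, Nat.choose_zero_right, Nat.cast_one, one_mul, Nat.sub_zero] at key
  have hq1 : n + q + 1 - q = n + 1 := by omega
  rw [hq1] at key
  have hS : (∑ i ∈ Finset.range (q + 1),
        (-1 : ℤ) ^ (i + q) * Nat.choose (q + 1) i * (genCompAll b (n + i) : ℤ))
      = ∑ j ∈ Finset.range (q+1),
        -((-1:ℤ)^(j+1) * ((q+1).choose (j+1)) * (genCompAll b (n+q+1-(j+1)) : ℤ)) := by
    rw [← Finset.sum_range_reflect]
    apply Finset.sum_congr rfl
    intro j hj
    rw [Finset.mem_range] at hj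
    have h1 : q + 1 - 1 - j = q - j := by omega
    rw [h1]
    have h2 : (q+1).choose (q-j) = (q+1).choose (j+1) := by
      have h2' : q - j = (q+1) - (j+1) := by omega
      rw [h2', Nat.choose_symm (by omega)]
    have h3 : n + (q - j) = n + q + 1 - (j+1) := by omega
    have h4 : (-1:ℤ)^(q-j+q) = -(-1:ℤ)^(j+1) := by
      have h5 : q - j + q = 2*(q-j) + j := by omega
      rw [h5, pow_add, pow_mul, neg_one_sq, one_pow, one_mul, pow_succ]
      ring
    rw [h2, h3, h4]
    ring
  rw [hS, Finset.sum_neg_distrib]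
  linarith [key]
end

section
/- Let b_i = c_{i-1} (the (i-1)-st Catalan number) for all positive integers i. Then for all integers n, k with 1 ≤ k < n, C^b(n,k) = ∑_{i=0}^{k-1} binom(k, i) · B(n-k, k-i), where B(m,j) is the Catalan triangle number. -/
open Finset

/-- The Catalan triangle number $B(m,j) = (j/m)\binom{2m}{m+j}$ (for $1 \le j \le m$);
it vanishes for $j > m$ since then $\binom{2m}{m+j} = 0$. -/
def catalanTriangle (m j : ℕ) : ℕ := j * Nat.choose (2 * m) (m + j) / m

section Aux

private lemma sum_antidiagonalTuple_succ {M : Type*} [AddCommMonoid M] (k n : ℕ)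
    (g : (Fin (k + 1) → ℕ) → M) :
    ∑ f ∈ Finset.Nat.antidiagonalTuple (k + 1) n, g f =
      ∑ p ∈ Finset.HasAntidiagonal.antidiagonal n, ∑ x ∈ Finset.Nat.antidiagonalTuple k p.2,
        g (Fin.cons p.1 x) := by
  rw [Finset.sum_sigma']
  refine Finset.sum_nbij' (fun f => ⟨(f 0, ∑ i, Fin.tail f i), Fin.tail f⟩)
    (fun a => Fin.cons a.1.1 a.2) ?_ ?_ ?_ ?_ ?_
  · intro f hf
    rw [Finset.Nat.mem_antidiagonalTuple] at hf
    simp only [Finset.mem_sigma, Finset.Nat.mem_antidiagonalTuple, Finset.HasAntidiagonal.mem_antidiagonal]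
    refine ⟨?_, trivial⟩
    rw [← hf, Fin.sum_univ_succ]
    rfl
  · intro a ha
    simp only [Finset.mem_sigma, Finset.Nat.mem_antidiagonalTuple,
      Finset.HasAntidiagonal.mem_antidiagonal] at ha
    rw [Finset.Nat.mem_antidiagonalTuple, Fin.sum_cons, ha.2, ha.1]
  · intro f _
    exact Fin.cons_self_tail f
  · intro a ha
    simp only [Finset.mem_sigma, Finset.Nat.mem_antidiagonalTuple,
      Finset.HasAntidiagonal.mem_antidiagonal] at ha
    ext1
    · simp [Fin.tail_cons, ha.2]
    · simp [Fin.tail_cons]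
  · intro f _
    exact congrArg g (Fin.cons_self_tail f).symm

private lemma coeff_mk_pow (b' : ℕ → ℕ) (k : ℕ) : ∀ n : ℕ,
    (PowerSeries.coeff n) ((PowerSeries.mk b') ^ k) =
      ∑ f ∈ Finset.Nat.antidiagonalTuple k n, ∏ j, b' (f j) := by
  induction k with
  | zero =>
    intro n
    cases n with
    | zero => simp
    | succ m => simp [PowerSeries.coeff_one]
  | succ k ih =>
    intro n
    rw [pow_succ', PowerSeries.coeff_mul, sum_antidiagonalTuple_succ]
    refine Finset.sum_congr rfl fun p _ => ?_
    rw [PowerSeries.coeff_mk, ih p.2, Finset.mul_sum]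
    refine Finset.sum_congr rfl fun x _ => ?_
    rw [Fin.prod_univ_succ]
    simp

/-- The Catalan generating function. -/
private noncomputable def catGF : PowerSeries ℕ := PowerSeries.mk catalan

private lemma catGF_eq : catGF = 1 + PowerSeries.X * catGF ^ 2 := by
  ext n
  cases n with
  | zero =>
    simp [catGF, PowerSeries.coeff_zero_eq_constantCoeff, PowerSeries.constantCoeff_mk]
  | succ m =>
    rw [map_add, PowerSeries.coeff_succ_X_mul, PowerSeries.coeff_one, if_neg (Nat.succ_ne_zero m)]
    rw [sq, PowerSeries.coeff_mul, catGF, PowerSeries.coeff_mk, catalan_succ']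
    simp [PowerSeries.coeff_mk]

private lemma coeff_zero_catGF_pow (k : ℕ) :
    (PowerSeries.coeff 0) (catGF ^ k) = 1 := by
  rw [PowerSeries.coeff_zero_eq_constantCoeff, map_pow]
  simp [catGF, PowerSeries.constantCoeff_mk]

private lemma catGF_pow_rec (k : ℕ) (hk : 1 ≤ k) :
    catGF ^ k = catGF ^ (k - 1) + PowerSeries.X * catGF ^ (k + 1) := by
  obtain ⟨j, rfl⟩ := Nat.exists_eq_add_of_le hk
  calc catGF ^ (1 + j) = catGF ^ j * catGF := by ring
    _ = catGF ^ j * (1 + PowerSeries.X * catGF ^ 2) := by rw [← catGF_eq]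
    _ = catGF ^ (1 + j - 1) + PowerSeries.X * catGF ^ (1 + j + 1) := by
        simp only [Nat.add_sub_cancel_left]
        ring

/-- The ballot numbers: `DD m k` is the coefficient of `x^m` in the `k`-th power of
the Catalan generating function. -/
private noncomputable def DD (m k : ℕ) : ℕ := (PowerSeries.coeff m) (catGF ^ k)

private lemma DD_rec (m k : ℕ) (hm : 1 ≤ m) (hk : 1 ≤ k) :
    DD m k = DD m (k - 1) + DD (m - 1) (k + 1) := by
  unfold DD
  rw [catGF_pow_rec k hk, map_add]
  congr 1
  obtain ⟨i, rfl⟩ := Nat.exists_eq_add_of_le hm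
  rw [Nat.add_comm 1 i, PowerSeries.coeff_succ_X_mul, Nat.add_sub_cancel]

private lemma DD_zero_left (k : ℕ) : DD 0 k = 1 := coeff_zero_catGF_pow k

private lemma DD_zero_right (m : ℕ) (hm : 1 ≤ m) : DD m 0 = 0 := by
  unfold DD
  rw [pow_zero, PowerSeries.coeff_one, if_neg (by omega)]

/-- The key binomial evaluation of the ballot numbers. -/
private lemma DD_eq_choose : ∀ m k : ℕ, 1 ≤ m + k →
    DD m k + Nat.choose (2 * m + k - 1) (m + k) = Nat.choose (2 * m + k - 1) m := by
  intro m
  induction m using Nat.strong_induction_on with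
  | _ m ihm =>
    intro k
    induction k using Nat.strong_induction_on with
    | _ k ihk =>
      intro hmk
      rcases Nat.eq_zero_or_pos m with hm | hm
      · subst hm
        rw [DD_zero_left]
        rw [Nat.choose_eq_zero_of_lt (by omega), Nat.choose_zero_right]
      rcases Nat.eq_zero_or_pos k with hk | hk
      · subst hk
        rw [DD_zero_right m hm]
        simp
      have h1 := ihk (k - 1) (by omega) (by omega)
      have h2 := ihm (m - 1) (by omega) (k + 1) (by omega)
      rw [DD_rec m k hm hk]
      have e1 : 2 * m + (k - 1) - 1 = 2 * m + k - 2 := by omega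
      have e2 : m + (k - 1) = m + k - 1 := by omega
      have e3 : 2 * (m - 1) + (k + 1) - 1 = 2 * m + k - 2 := by omega
      have e4 : m - 1 + (k + 1) = m + k := by omega
      rw [e1, e2] at h1
      rw [e3, e4] at h2
      have p1 : Nat.choose (2 * m + k - 1) (m + k) =
          Nat.choose (2 * m + k - 2) (m + k - 1) + Nat.choose (2 * m + k - 2) (m + k) := by
        have h := Nat.choose_succ_succ' (2 * m + k - 2) (m + k - 1)
        rw [show (2 * m + k - 2) + 1 = 2 * m + k - 1 by omega,
          show (m + k - 1) + 1 = m + k by omega] at h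
        exact h
      have p2 : Nat.choose (2 * m + k - 1) m =
          Nat.choose (2 * m + k - 2) (m - 1) + Nat.choose (2 * m + k - 2) m := by
        have h := Nat.choose_succ_succ' (2 * m + k - 2) (m - 1)
        rw [show (2 * m + k - 2) + 1 = 2 * m + k - 1 by omega,
          show (m - 1) + 1 = m by omega] at h
        exact h
      omega

private lemma catalanTriangle_add_choose (m : ℕ) (hm : 1 ≤ m) (j : ℕ) :
    catalanTriangle m j + Nat.choose (2 * m - 1) (m + j) =
      if j ≤ m then Nat.choose (2 * m - 1) (m - j) else 0 := by
  rcases Nat.eq_zero_or_pos j with hj | hj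
  · subst hj
    simp [catalanTriangle]
  rcases le_or_gt j m with hjm | hjm
  · rw [if_pos hjm]
    set A := Nat.choose (2 * m - 1) (m + j - 1) with hA
    set B := Nat.choose (2 * m - 1) (m + j) with hB
    set C := Nat.choose (2 * m) (m + j) with hC
    have hi : B * (m + j) = A * (m - j) := by
      have h := Nat.choose_succ_right_eq (2 * m - 1) (m + j - 1)
      rw [show (m + j - 1) + 1 = m + j by omega] at h
      rw [h, show 2 * m - 1 - (m + j - 1) = m - j by omega]
    have hii : C = A + B := by
      have h := Nat.choose_succ_succ' (2 * m - 1) (m + j - 1)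
      rw [show (2 * m - 1) + 1 = 2 * m by omega,
        show (m + j - 1) + 1 = m + j by omega] at h
      exact h
    have hiii : j * C + m * B = m * A := by
      zify [hjm] at hi hii ⊢
      linear_combination j * hii + hi
    have hBA : B ≤ A := Nat.le_of_mul_le_mul_left (by omega) hm
    have h4 : m * (A - B) + m * B = m * A := by
      rw [← Nat.mul_add, Nat.sub_add_cancel hBA]
    have hjC : j * C = m * (A - B) := Nat.add_right_cancel (hiii.trans h4.symm)
    have hCT : catalanTriangle m j = A - B := by
      unfold catalanTriangle
      rw [← hC, hjC, Nat.mul_div_cancel_left _ hm]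
    rw [hCT, Nat.sub_add_cancel hBA]
    have h := Nat.choose_symm (show m + j - 1 ≤ 2 * m - 1 by omega)
    rw [show 2 * m - 1 - (m + j - 1) = m - j by omega] at h
    exact h.symm
  · rw [if_neg (by omega)]
    have h1 : Nat.choose (2 * m) (m + j) = 0 := Nat.choose_eq_zero_of_lt (by omega)
    have h2 : Nat.choose (2 * m - 1) (m + j) = 0 := Nat.choose_eq_zero_of_lt (by omega)
    simp [catalanTriangle, h1, h2]

private lemma sum_choose_catalanTriangle (m k : ℕ) (hm : 1 ≤ m) (hk : 1 ≤ k) :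
    (∑ i ∈ Finset.range k, Nat.choose k i * catalanTriangle m (k - i)) +
      Nat.choose (2 * m + k - 1) (m + k) = Nat.choose (2 * m + k - 1) m := by
  have ha : (∑ i ∈ Finset.range k, Nat.choose k i * catalanTriangle m (k - i)) =
      ∑ j ∈ Finset.range (k + 1), Nat.choose k j * catalanTriangle m j := by
    rw [Finset.sum_range_succ', show catalanTriangle m 0 = 0 from by simp [catalanTriangle],
      mul_zero, add_zero,
      ← Finset.sum_range_reflect (fun j => Nat.choose k (j + 1) * catalanTriangle m (j + 1)) k]
    refine Finset.sum_congr rfl fun i hi => ?_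
    rw [Finset.mem_range] at hi
    rw [show k - 1 - i + 1 = k - i by omega]
    congr 1
    rw [← Nat.choose_symm hi.le]
  have hc : (∑ j ∈ Finset.range (k + 1),
        Nat.choose k j * Nat.choose (2 * m - 1) (m + j)) =
      Nat.choose (2 * m + k - 1) (m + k) := by
    have hv := Nat.add_choose_eq (2 * m - 1) k (m + k)
    rw [Finset.Nat.sum_antidiagonal_eq_sum_range_succ_mk,
      show (m + k).succ = m + (k + 1) by omega, Finset.sum_range_add] at hv
    dsimp only at hv
    have h0 : (∑ x ∈ Finset.range m,
        Nat.choose (2 * m - 1) x * Nat.choose k (m + k - x)) = 0 := by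
      refine Finset.sum_eq_zero fun p hp => ?_
      rw [Finset.mem_range] at hp
      rw [Nat.choose_eq_zero_of_lt (show k < m + k - p by omega), mul_zero]
    rw [h0, zero_add] at hv
    rw [show 2 * m + k - 1 = 2 * m - 1 + k by omega, hv]
    refine Finset.sum_congr rfl fun j hj => ?_
    rw [Finset.mem_range] at hj
    rw [show m + k - (m + j) = k - j by omega, Nat.choose_symm (by omega), mul_comm]
  have hd : (∑ j ∈ Finset.range (k + 1), Nat.choose k j *
        (if j ≤ m then Nat.choose (2 * m - 1) (m - j) else 0)) =
      Nat.choose (2 * m + k - 1) m := by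
    have hv := Nat.add_choose_eq (2 * m - 1) k m
    rw [Finset.Nat.sum_antidiagonal_eq_sum_range_succ_mk,
      ← Finset.sum_range_reflect (fun p => Nat.choose (2 * m - 1) p * Nat.choose k (m - p))
        (m + 1)] at hv
    have hv' : Nat.choose (2 * m - 1 + k) m = ∑ j ∈ Finset.range (m + 1),
        Nat.choose k j * (if j ≤ m then Nat.choose (2 * m - 1) (m - j) else 0) := by
      rw [hv]
      refine Finset.sum_congr rfl fun j hj => ?_
      rw [Finset.mem_range] at hj
      rw [show m + 1 - 1 - j = m - j by omega, show m - (m - j) = j by omega,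
        if_pos (by omega), mul_comm]
    have hbig : ∀ N : ℕ, m + 1 ≤ N → k + 1 ≤ N → (∑ j ∈ Finset.range (m + 1),
        Nat.choose k j * (if j ≤ m then Nat.choose (2 * m - 1) (m - j) else 0)) =
        ∑ j ∈ Finset.range (k + 1),
        Nat.choose k j * (if j ≤ m then Nat.choose (2 * m - 1) (m - j) else 0) := by
      intro N hN1 hN2
      rw [Finset.sum_subset (Finset.range_subset_range.2 hN1) (fun x hx hx' => ?_),
        ← Finset.sum_subset (Finset.range_subset_range.2 hN2) (fun x hx hx' => ?_)]
      · rw [Finset.mem_range] at hx hx'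
        rw [Nat.choose_eq_zero_of_lt (by omega), zero_mul]
      · rw [Finset.mem_range] at hx hx'
        rw [if_neg (by omega), mul_zero]
    rw [show 2 * m + k - 1 = 2 * m - 1 + k by omega, hv',
      hbig (m + k + 1) (by omega) (by omega)]
  rw [ha, ← hc, ← Finset.sum_add_distrib]
  rw [← hd]
  refine Finset.sum_congr rfl fun j _ => ?_
  rw [← Nat.mul_add, catalanTriangle_add_choose m hm j]

private lemma genComp_eq_coeff (b : ℕ → ℕ) (n k : ℕ) :
    genComp b n k = (PowerSeries.coeff n)
      ((PowerSeries.mk fun i => if i = 0 then 0 else b i) ^ k) := by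
  rw [coeff_mk_pow, genComp, Finset.sum_filter]
  refine Finset.sum_congr rfl fun f _ => ?_
  by_cases h : ∀ j, 0 < f j
  · rw [if_pos h]
    exact Finset.prod_congr rfl fun j _ => (if_neg (Nat.pos_iff_ne_zero.mp (h j))).symm
  · rw [if_neg h]
    push_neg at h
    obtain ⟨j, hj⟩ := h
    refine (Finset.prod_eq_zero (Finset.mem_univ j) ?_).symm
    rw [if_pos (by omega)]

end Aux

theorem genComp_catalan_shifted_triangle (b : ℕ → ℕ)
    (hb : ∀ i, 1 ≤ i → b i = catalan (i - 1))
    (n k : ℕ) (hk : 1 ≤ k) (hkn : k < n) :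
    genComp b n k =
      ∑ i ∈ Finset.range k, Nat.choose k i * catalanTriangle (n - k) (k - i) := by
  set m := n - k with hmdef
  have hm : 1 ≤ m := by omega
  -- identify the generating function
  have hX : (PowerSeries.mk fun i => if i = 0 then 0 else b i) = PowerSeries.X * catGF := by
    ext i
    cases i with
    | zero =>
      simp [PowerSeries.coeff_zero_eq_constantCoeff]
    | succ i =>
      rw [PowerSeries.coeff_mk, PowerSeries.coeff_succ_X_mul, catGF, PowerSeries.coeff_mk,
        if_neg (Nat.succ_ne_zero i), hb (i + 1) (by omega), Nat.add_sub_cancel]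
  have hgen : genComp b n k = DD m k := by
    rw [genComp_eq_coeff, hX, mul_pow, DD]
    rw [show n = m + k by omega, PowerSeries.coeff_X_pow_mul]
  have h1 := DD_eq_choose m k (by omega)
  have h2 := sum_choose_catalanTriangle m k hm hk
  omega
end
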